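/- Let d1 > 0, d2 > 0, y⋆ > 0 with d1·d2 < 1/(4·y⋆²), and define h(u) := (u/d2)·(u² - u/y⋆ + d1·d2) and ū := (1/(2·y⋆))·(1 + √(1 - 4·d1·d2·y⋆²)). Then h(ū) = 0 and h'(ū) > 0; that is, the nonzero equilibrium of the zero dynamics corresponding to the minimal-current operating point is unstable (by linearization of the scalar equation u' = h(u)). -/

import Mathlib

/-- the nonzero equilibrium of the zero dynamics corresponding to the
minimal-current operating point is unstable (h(ū) = 0 and h'(ū) > 0). -/
theorem boost_zero_dynamics_unstable_equilibrium
    (d1 d2 ystar : ℝ) (hd1 : 0 < d1) (hd2 : 0 < d2) (hy : 0 < ystar)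
    (hcond : d1 * d2 < 1 / (4 * ystar ^ 2))
    (h : ℝ → ℝ)
    (hh : ∀ u : ℝ, h u = (u / d2) * (u ^ 2 - u / ystar + d1 * d2))
    (ubar : ℝ)
    (hubar : ubar = (1 / (2 * ystar)) * (1 + Real.sqrt (1 - 4 * d1 * d2 * ystar ^ 2))) :
    h ubar = 0 ∧ 0 < deriv h ubar := by
  set s := Real.sqrt (1 - 4 * d1 * d2 * ystar ^ 2) with hs
  have hpos : 0 < 1 - 4 * d1 * d2 * ystar ^ 2 := by
    have h4 : 0 < 4 * ystar ^ 2 := by positivity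
    rw [lt_div_iff₀ h4] at hcond
    nlinarith
  have hs2 : s ^ 2 = 1 - 4 * d1 * d2 * ystar ^ 2 := Real.sq_sqrt hpos.le
  have hspos : 0 < s := Real.sqrt_pos.mpr hpos
  have hupos : 0 < ubar := by
    rw [hubar]; positivity
  have heq : ubar ^ 2 - ubar / ystar + d1 * d2 = 0 := by
    rw [hubar]
    field_simp
    nlinarith [hs2]
  have hfun : h = fun u : ℝ => (u / d2) * (u ^ 2 - u / ystar + d1 * d2) := funext hh
  have H : HasDerivAt h
      ((1 / d2) * (ubar ^ 2 - ubar / ystar + d1 * d2)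
        + (ubar / d2) * (2 * ubar ^ 1 - 1 / ystar)) ubar := by
    rw [hfun]
    have h1 : HasDerivAt (fun u : ℝ => u / d2) (1 / d2) ubar := by
      simpa using (hasDerivAt_id ubar).div_const d2
    have h2 : HasDerivAt (fun u : ℝ => u ^ 2 - u / ystar + d1 * d2)
        (2 * ubar ^ 1 - 1 / ystar) ubar := by
      exact (((hasDerivAt_pow 2 ubar).sub
        (by simpa using (hasDerivAt_id ubar).div_const ystar)).add_const (d1 * d2))
    simpa [Pi.mul_def] using h1.mul h2
  constructor
  · rw [hh, heq, mul_zero]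
  · rw [H.deriv, heq, mul_zero, zero_add]
    have h2u : 2 * ubar ^ 1 - 1 / ystar = s / ystar := by
      rw [hubar]; field_simp; ring
    rw [h2u]
    positivity
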